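/- Let r ≥ 2 and let B be the squarefree zero-sum sequence over C_2^r whose support is exactly C_2^r \ {0} (each nonzero element occurring exactly once). Then the maximal number of factors in a factorization of B into minimal zero-sum sequences equals ⌊(2^r − 1)/3⌋. -/

import Mathlib

open Multiset

/-- A nonempty zero-sum sequence (multiset) over `G`. -/
def IsZeroSumSeq {G : Type*} [AddCommGroup G] (S : Multiset G) : Prop :=
  S ≠ 0 ∧ S.sum = 0

/-- A minimal zero-sum sequence: nonempty, zero-sum, and with no proper
nonempty zero-sum subsequence. -/
def IsMinZeroSum {G : Type*} [AddCommGroup G] (S : Multiset G) : Prop :=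
  S ≠ 0 ∧ S.sum = 0 ∧ ∀ T : Multiset G, T ≤ S → T ≠ 0 → T.sum = 0 → T = S

/-- `ζ` is a factorization of `B` into minimal zero-sum sequences. -/
def IsFactorization {G : Type*} [AddCommGroup G] (ζ : Multiset (Multiset G))
    (B : Multiset G) : Prop :=
  ζ.sum = B ∧ ∀ A ∈ ζ, IsMinZeroSum A

/-- The set of lengths `L(B)` of factorizations of `B` into minimal zero-sum
sequences. -/
def lengthSet {G : Type*} [AddCommGroup G] (B : Multiset G) : Set ℕ :=
  { n | ∃ ζ : Multiset (Multiset G), IsFactorization ζ B ∧ Multiset.card ζ = n }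

/-- `max L(B)`, the maximal length of a factorization of `B` into minimal
zero-sum sequences. -/
noncomputable def maxL {G : Type*} [AddCommGroup G] (B : Multiset G) : ℕ :=
  sSup (lengthSet B)

/-- `S` contains `k` disjoint nonempty zero-sum subsequences. -/
def HasKDisjointZeroSum {G : Type*} [AddCommGroup G] (k : ℕ) (S : Multiset G) : Prop :=
  ∃ T : Multiset (Multiset G), Multiset.card T = k ∧
    (∀ A ∈ T, IsZeroSumSeq A) ∧ T.sum ≤ S

/-- The `k`-wise Davenport constant: the smallest `ℓ` such that every sequence
over `G` of length at least `ℓ` has `k` disjoint nonempty zero-sum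
subsequences. -/
noncomputable def Dk (G : Type*) [AddCommGroup G] (k : ℕ) : ℕ :=
  sInf { ℓ : ℕ | ∀ S : Multiset G, ℓ ≤ Multiset.card S → HasKDisjointZeroSum k S }

/-- `s_{≤ k}(G)` as an extended natural number: the smallest `m` such that every
sequence over `G` of length at least `m` has a nonempty zero-sum subsequence of
length at most `k`. -/
noncomputable def sLE (G : Type*) [AddCommGroup G] (k : ℕ) : ℕ∞ :=
  sInf { m : ℕ∞ | ∀ S : Multiset G, m ≤ (Multiset.card S : ℕ∞) →
    ∃ T ≤ S, T ≠ 0 ∧ T.sum = 0 ∧ Multiset.card T ≤ k }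

/-- `s_{≤ k}(G)` as a natural number (used when it is known to be finite). -/
noncomputable def sleN (G : Type*) [AddCommGroup G] (k : ℕ) : ℕ :=
  sInf { m : ℕ | ∀ S : Multiset G, m ≤ Multiset.card S →
    ∃ T ≤ S, T ≠ 0 ∧ T.sum = 0 ∧ Multiset.card T ≤ k }

/-- `η(G) = s_{≤ exp(G)}(G)`. -/
noncomputable def etaC (G : Type*) [AddCommGroup G] : ℕ :=
  sleN G (AddMonoid.exponent G)

section Aux

open Multiset Function

abbrev KK : Type := ZMod 2 × ZMod 2

def NZ (G : Type*) [AddCommGroup G] [Fintype G] [DecidableEq G] : Multiset G :=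
  (Finset.univ.erase (0 : G)).val

variable {G : Type*} [AddCommGroup G]

section NZlem
variable [Fintype G] [DecidableEq G]

lemma mem_NZ {x : G} : x ∈ NZ G ↔ x ≠ 0 := by
  rw [NZ, ← Finset.mem_def, Finset.mem_erase]
  simp

lemma nodup_NZ : (NZ G).Nodup := (Finset.univ.erase 0).nodup

lemma count_NZ (x : G) : (NZ G).count x = if x = 0 then 0 else 1 := by
  rcases eq_or_ne x 0 with rfl | hx
  · rw [if_pos rfl, Multiset.count_eq_zero]
    simp [mem_NZ]
  · rw [if_neg hx]
    exact Multiset.count_eq_one_of_mem nodup_NZ (mem_NZ.mpr hx)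

lemma card_NZ : Multiset.card (NZ G) = Fintype.card G - 1 := by
  have : Multiset.card (NZ G) = (Finset.univ.erase (0 : G)).card := rfl
  rw [this, Finset.card_erase_of_mem (Finset.mem_univ 0), Finset.card_univ]

end NZlem

lemma map_NZ {H : Type*} [AddCommGroup H] [Fintype G] [DecidableEq G]
    [Fintype H] [DecidableEq H] (e : G → H) (hbij : Function.Bijective e)
    (h0 : e 0 = 0) : (NZ G).map e = NZ H := by
  refine Multiset.ext.mpr fun y => ?_
  obtain ⟨x, rfl⟩ := hbij.2 y
  rw [Multiset.count_map_eq_count' _ _ hbij.1, count_NZ, count_NZ]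
  have hx0 : e x = 0 ↔ x = 0 := by
    constructor
    · intro h; exact hbij.1 (by rw [h, h0])
    · rintro rfl; exact h0
  simp [hx0]

/-- Decidable reformulation of minimality via powersets. -/
lemma isMinZeroSum_iff (S : Multiset G) :
    IsMinZeroSum S ↔ S ≠ 0 ∧ S.sum = 0 ∧
      ∀ T ∈ S.powerset, T ≠ 0 → T.sum = 0 → T = S := by
  simp [IsMinZeroSum, Multiset.mem_powerset]

lemma isMinZeroSum_triple (htwo : ∀ g : G, g + g = 0) {a b : G}
    (ha : a ≠ 0) (hb : b ≠ 0) (hab : a ≠ b) :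
    IsMinZeroSum ({a, b, a + b} : Multiset G) := by
  have hcancel : ∀ x y : G, x + y = 0 → y = x := by
    intro x y hxy
    have := htwo x
    exact add_left_cancel (a := x) (by rw [hxy, this])
  have hab0 : a + b ≠ 0 := fun h => hab (hcancel a b h).symm
  have hnodup : ({a, b, a + b} : Multiset G).Nodup := by
    have h1 : a ≠ a + b := by
      intro h
      have h' : a + 0 = a + b := by rw [add_zero, ← h]
      exact hb (add_left_cancel h').symm
    have h2 : b ≠ a + b := by
      intro h
      have h' : b + 0 = b + a := by
        rw [add_zero]
        rw [add_comm] at h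
        exact h
      exact ha (add_left_cancel h').symm
    simp [hab, h1, h2]
  refine ⟨by simp, ?_, ?_⟩
  · have : a + (b + (a + b)) = (a + a) + (b + b) := by abel
    simp [this, htwo]
  · intro T hT hT0 hTsum
    obtain ⟨U, hU⟩ := Multiset.le_iff_exists_add.mp hT
    have hcards : Multiset.card T + Multiset.card U = 3 := by
      have := congrArg Multiset.card hU
      simpa [Multiset.card_add] using this.symm
    have hT1 : Multiset.card T ≠ 1 := by
      intro h1
      obtain ⟨x, rfl⟩ := Multiset.card_eq_one.mp h1
      have hx : x ∈ ({a, b, a + b} : Multiset G) := Multiset.mem_of_le hT (Multiset.mem_singleton_self x)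
      have hx0 : x ≠ 0 := by
        rcases Multiset.mem_cons.mp hx with rfl | hx'
        · exact ha
        rcases Multiset.mem_cons.mp hx' with rfl | hx''
        · exact hb
        · rw [Multiset.mem_singleton.mp hx'']; exact hab0
      exact hx0 (by simpa using hTsum)
    have hT2 : Multiset.card T ≠ 2 := by
      intro h2
      obtain ⟨x, y, rfl⟩ := Multiset.card_eq_two.mp h2
      have hyx : y = x := hcancel x y (by simpa using hTsum)
      subst hyx
      have : ({y, y} : Multiset G).Nodup := Multiset.nodup_of_le hT hnodup
      simp at this
    have hT3 : Multiset.card T = 3 := by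
      have h0 : Multiset.card T ≠ 0 := fun h => hT0 (Multiset.card_eq_zero.mp h)
      omega
    have : Multiset.card U = 0 := by omega
    rw [Multiset.card_eq_zero.mp this, add_zero] at hU
    exact hU.symm


lemma isMinZeroSum_map {H : Type*} [AddCommGroup H] (ι : G →+ H)
    (ρ : H → G) (hρ : ∀ g, ρ (ι g) = g) {S : Multiset G}
    (hS : IsMinZeroSum S) : IsMinZeroSum (S.map ι) := by
  obtain ⟨h0, hsum, hmin⟩ := hS
  have hinj : Function.Injective ι := fun a b hab => by
    rw [← hρ a, hab, hρ]
  refine ⟨by simpa using h0, by rw [← map_multiset_sum ι S, hsum]; exact _root_.map_zero ι, ?_⟩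
  intro T hT hT0 hTsum
  have hmem : ∀ x ∈ T, ι (ρ x) = x := by
    intro x hxT
    obtain ⟨g, _, rfl⟩ := Multiset.mem_map.mp (Multiset.mem_of_le hT hxT)
    rw [hρ]
  have hTeq : (T.map ρ).map ι = T := by
    rw [Multiset.map_map]
    exact Multiset.map_congr rfl hmem |>.trans (Multiset.map_id T)
  have hT'le : T.map ρ ≤ S := by
    have h := Multiset.map_le_map (f := ρ) hT
    rw [Multiset.map_map] at h
    have h2 : Multiset.map (ρ ∘ ⇑ι) S = S := by
      rw [show ρ ∘ ⇑ι = id from funext hρ, Multiset.map_id]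
    rwa [h2] at h
  have hT'0 : T.map ρ ≠ 0 := by
    intro h
    apply hT0
    rw [← hTeq, h, Multiset.map_zero]
  have hT'sum : (T.map ρ).sum = 0 := by
    apply hinj
    rw [_root_.map_zero, map_multiset_sum ι, hTeq, hTsum]
  rw [← hTeq, hmin _ hT'le hT'0 hT'sum]

lemma sum_map_triple {H : Type*} [DecidableEq H] (f g h : G → H) (S : Multiset G) :
    (S.map (fun v => ({f v, g v, h v} : Multiset H))).sum
      = S.map f + S.map g + S.map h := by
  induction S using Multiset.induction_on with
  | empty => simp
  | cons a s ih =>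
      simp only [Multiset.map_cons, Multiset.sum_cons, ih]
      refine Multiset.ext.mpr fun x => ?_
      simp only [Multiset.count_add, Multiset.count_cons, Multiset.count_singleton,
        Multiset.insert_eq_cons, Multiset.count_zero]
      split_ifs <;> omega

lemma count_map_pair {E : Type*} [DecidableEq G] [DecidableEq E]
    (S : Multiset G) (e : E) (g : G) (k : E) :
    ((S.map fun v => (v, e)).count (g, k)) = if k = e then S.count g else 0 := by
  by_cases hk : k = e
  · subst hk
    rw [if_pos rfl]
    have hinj : Function.Injective (fun v : G => (v, k)) := fun a b hab => by
      simpa using congrArg Prod.fst hab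
    exact Multiset.count_map_eq_count' _ _ hinj g
  · rw [if_neg hk, Multiset.count_eq_zero]
    intro hmem
    obtain ⟨v, _, hv⟩ := Multiset.mem_map.mp hmem
    exact hk (congrArg Prod.snd hv).symm

def HasSigma (G : Type*) [AddCommGroup G] : Prop :=
  ∃ σ : G → G, Function.Bijective σ ∧ Function.Bijective (fun v => v + σ v) ∧ σ 0 = 0

def GoodP (G : Type*) [AddCommGroup G] [Fintype G] [DecidableEq G] : Prop :=
  (∀ g : G, g + g = 0) ∧ HasSigma G ∧
    ∃ ζ : Multiset (Multiset G), IsFactorization ζ (NZ G) ∧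
      Multiset.card ζ = (Fintype.card G - 1) / 3

lemma goodP_congr {H : Type*} [AddCommGroup H] [Fintype G] [DecidableEq G]
    [Fintype H] [DecidableEq H] (e : G ≃+ H) (hG : GoodP G) : GoodP H := by
  obtain ⟨htwo, ⟨σ, hσ, hτ, hσ0⟩, ζ, ⟨hsum, hmin⟩, hcard⟩ := hG
  refine ⟨?_, ⟨fun h => e (σ (e.symm h)), ?_, ?_, ?_⟩, ?_⟩
  · intro h
    calc h + h = e (e.symm h + e.symm h) := by
          rw [_root_.map_add, e.apply_symm_apply]
      _ = 0 := by rw [htwo, _root_.map_zero]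
  · exact e.bijective.comp (hσ.comp e.symm.bijective)
  · have hfun : (fun v : H => v + e (σ (e.symm v)))
        = (fun g => e ((fun v => v + σ v) (e.symm g))) := by
      funext v
      rw [_root_.map_add, e.apply_symm_apply]
    rw [hfun]
    exact e.bijective.comp (hτ.comp e.symm.bijective)
  · simp [hσ0]
  · refine ⟨ζ.map (Multiset.map e), ⟨?_, ?_⟩, ?_⟩
    · have h1 : (ζ.map (Multiset.map e)).sum = Multiset.map e ζ.sum := by
        have := map_multiset_sum (Multiset.mapAddMonoidHom (e : G → H)) ζ
        simpa [Multiset.mapAddMonoidHom] using this.symm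
      rw [h1, hsum]
      exact map_NZ e e.bijective (map_zero e)
    · intro A hA
      obtain ⟨A₀, hA₀, rfl⟩ := Multiset.mem_map.mp hA
      exact isMinZeroSum_map e.toAddMonoidHom e.symm (fun g => e.symm_apply_apply g)
        (hmin A₀ hA₀)
    · rw [Multiset.card_map, hcard, Fintype.card_congr e.toEquiv]

def ke1 : KK := (1, 0)
def ke2 : KK := (0, 1)
def ke3 : KK := (1, 1)

lemma goodP_step [Fintype G] [DecidableEq G] (h : GoodP G) : GoodP (G × KK) := by
  obtain ⟨htwo, ⟨σ, hσ, hτ, hσ0⟩, ζ, ⟨hsum, hmin⟩, hcard⟩ := h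
  have htwoK : ∀ k : KK, k + k = 0 := by decide
  have htwo' : ∀ g : G × KK, g + g = 0 := fun g => by
    have : (g.1 + g.1, g.2 + g.2) = ((0 : G), (0 : KK)) := by rw [htwo, htwoK]
    exact this
  have hτ0 : (fun v : G => v + σ v) 0 = 0 := by simp [hσ0]
  refine ⟨htwo', ?_, ?_⟩
  · refine ⟨Prod.map σ (fun p => (p.2, p.1 + p.2)), ?_, ?_, ?_⟩
    · exact hσ.prodMap (by decide)
    · have hfun : (fun v : G × KK => v + Prod.map σ (fun p : KK => (p.2, p.1 + p.2)) v)
          = Prod.map (fun v => v + σ v) (fun p : KK => p + (p.2, p.1 + p.2)) := rfl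
      rw [hfun]
      exact hτ.prodMap (by decide)
    · have : σ (0 : G) = 0 := hσ0
      simp [Prod.map, this]
  · refine ⟨ζ.map (Multiset.map (fun v : G => (v, (0 : KK))))
        + (({((0:G), ke1), ((0:G), ke2), ((0:G), ke3)} : Multiset (G × KK)) ::ₘ
           (NZ G).map (fun v =>
             ({(v, ke1), (σ v, ke2), (v + σ v, ke3)} : Multiset (G × KK)))),
      ⟨?_, ?_⟩, ?_⟩
    · rw [Multiset.sum_add, Multiset.sum_cons]
      have hz : (ζ.map (Multiset.map (fun v : G => (v, (0 : KK))))).sum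
          = Multiset.map (fun v : G => (v, (0 : KK))) ζ.sum := by
        have := map_multiset_sum
          (Multiset.mapAddMonoidHom ((AddMonoidHom.inl G KK) : G → G × KK)) ζ
        have hc : ⇑(AddMonoidHom.inl G KK) = fun v => (v, (0 : KK)) := rfl
        simpa [Multiset.mapAddMonoidHom, hc] using this.symm
      rw [hz, hsum, sum_map_triple]
      have hg2 : (NZ G).map (fun v => (σ v, ke2))
          = (NZ G).map (fun w => (w, ke2)) := by
        rw [show (fun v : G => (σ v, ke2)) = (fun w : G => (w, ke2)) ∘ σ from rfl,
          ← Multiset.map_map, map_NZ σ hσ hσ0]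
      have hg3 : (NZ G).map (fun v => (v + σ v, ke3))
          = (NZ G).map (fun w => (w, ke3)) := by
        rw [show (fun v : G => (v + σ v, ke3))
            = (fun w : G => (w, ke3)) ∘ (fun v => v + σ v) from rfl,
          ← Multiset.map_map, map_NZ _ hτ hτ0]
      rw [hg2, hg3]
      refine Multiset.ext.mpr fun x => ?_
      obtain ⟨g, k⟩ := x
      have hk : k = 0 ∨ k = ke1 ∨ k = ke2 ∨ k = ke3 := by
        revert k; decide
      simp only [Multiset.count_add, count_map_pair, count_NZ,
        Multiset.insert_eq_cons, Multiset.count_cons, Multiset.count_singleton,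
        Multiset.count_zero, Prod.mk.injEq, Prod.ext_iff]
      rcases hk with rfl | rfl | rfl | rfl <;>
        by_cases hg : g = 0 <;>
          simp [hg, ke1, ke2, ke3, Prod.ext_iff] <;> decide
    · intro A hA
      rcases Multiset.mem_add.mp hA with hA | hA
      · obtain ⟨A₀, hA₀, rfl⟩ := Multiset.mem_map.mp hA
        exact isMinZeroSum_map (AddMonoidHom.inl G KK) Prod.fst (fun g => rfl)
          (hmin A₀ hA₀)
      · rcases Multiset.mem_cons.mp hA with rfl | hA
        · have hadd : ((0:G), ke1) + ((0:G), ke2) = ((0:G), ke3) := by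
            have h12 : ke1 + ke2 = ke3 := by decide
            rw [Prod.mk_add_mk, add_zero, h12]
          have := isMinZeroSum_triple htwo' (a := ((0:G), ke1)) (b := ((0:G), ke2))
            (fun h => (by decide : ke1 ≠ 0) (congrArg Prod.snd h))
            (fun h => (by decide : ke2 ≠ 0) (congrArg Prod.snd h))
            (fun h => (by decide : ke1 ≠ ke2) (congrArg Prod.snd h))
          rwa [hadd] at this
        · obtain ⟨v, hv, rfl⟩ := Multiset.mem_map.mp hA
          have hv0 : v ≠ 0 := mem_NZ.mp hv
          have hσv0 : σ v ≠ 0 := fun h => hv0 (hσ.1 (h.trans hσ0.symm))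
          have hadd : (v, ke1) + (σ v, ke2) = (v + σ v, ke3) := by
            have h12 : ke1 + ke2 = ke3 := by decide
            rw [Prod.mk_add_mk, h12]
          have := isMinZeroSum_triple htwo' (a := (v, ke1)) (b := (σ v, ke2))
            (fun h => hv0 (congrArg Prod.fst h))
            (fun h => hσv0 (congrArg Prod.fst h))
            (fun h => (by decide : ke1 ≠ ke2) (congrArg Prod.snd h))
          rwa [hadd] at this
    · rw [Multiset.card_add, Multiset.card_map, Multiset.card_cons,
        Multiset.card_map, hcard, card_NZ]
      have h1 : 1 ≤ Fintype.card G := Fintype.card_pos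
      have h4 : Fintype.card (G × KK) = 4 * Fintype.card G := by
        rw [Fintype.card_prod]
        have : Fintype.card KK = 4 := rfl
        rw [this]; ring
      rw [h4]
      omega

def E2 : (Fin 2 → ZMod 2) ≃+ KK where
  toFun f := (f 0, f 1)
  invFun p := fun j => if j = 0 then p.1 else p.2
  left_inv f := by
    funext j
    fin_cases j <;> simp
  right_inv p := by simp
  map_add' f g := rfl

def E3 : (Fin 3 → ZMod 2) ≃+ (ZMod 2 × KK) where
  toFun f := (f 0, (f 1, f 2))
  invFun p := fun j => if j = 0 then p.1 else if j = 1 then p.2.1 else p.2.2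
  left_inv f := by
    funext j
    fin_cases j <;> simp
  right_inv p := by simp
  map_add' f g := rfl

def EStep (m : ℕ) : (Fin (m + 2) → ZMod 2) ≃+ ((Fin m → ZMod 2) × KK) where
  toFun f := (fun i => f ⟨i.1, by omega⟩, (f ⟨m, by omega⟩, f ⟨m + 1, by omega⟩))
  invFun p := fun j => if h : (j : ℕ) < m then p.1 ⟨j, h⟩
    else if (j : ℕ) = m then p.2.1 else p.2.2
  left_inv f := by
    funext j
    by_cases h1 : (j : ℕ) < m
    · simp only [dif_pos h1]
    · by_cases h2 : (j : ℕ) = m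
      · simp only [dif_neg h1, if_pos h2]
        congr 1
        exact Fin.ext h2.symm
      · have h3 : (j : ℕ) = m + 1 := by omega
        simp only [dif_neg h1, if_neg h2]
        congr 1
        exact Fin.ext h3.symm
  right_inv p := by
    refine Prod.ext ?_ (Prod.ext ?_ ?_)
    · funext i
      simp only [dif_pos i.isLt]
    · simp
    · simp
  map_add' f g := rfl

lemma base2 : GoodP KK := by
  refine ⟨by decide, ⟨fun p => (p.2, p.1 + p.2), by decide, by decide, by decide⟩, ?_⟩
  refine ⟨{NZ KK}, ⟨by simp, ?_⟩, ?_⟩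
  · intro A hA
    rw [Multiset.mem_singleton.mp hA, isMinZeroSum_iff]
    decide
  · simp only [Multiset.card_singleton]
    decide

lemma base3 : GoodP (ZMod 2 × KK) := by
  refine ⟨by decide,
    ⟨fun p => (p.2.2, (p.1 + p.2.2, p.2.1)), by decide, by decide, by decide⟩, ?_⟩
  refine ⟨{({(0,(0,1)), (0,(1,0)), (0,(1,1))} : Multiset (ZMod 2 × KK)),
           ({(1,(0,0)), (1,(0,1)), (1,(1,0)), (1,(1,1))} : Multiset (ZMod 2 × KK))},
    ⟨?_, ?_⟩, ?_⟩
  · decide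
  · intro A hA
    rw [isMinZeroSum_iff]
    rcases Multiset.mem_cons.mp hA with rfl | hA
    · decide
    · rw [Multiset.mem_singleton.mp hA]
      decide
  · decide

lemma goodP_fin : ∀ n : ℕ, GoodP (Fin (n + 2) → ZMod 2) := by
  intro n
  induction n using Nat.strong_induction_on with
  | _ n ih =>
    match n, ih with
    | 0, _ => exact goodP_congr E2.symm base2
    | 1, _ => exact goodP_congr E3.symm base3
    | (m + 2), ih =>
        exact goodP_congr (EStep (m + 2)).symm (goodP_step (ih m (by omega)))

lemma length_le [Fintype G] [DecidableEq G] (htwo : ∀ g : G, g + g = 0)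
    {n : ℕ} (hn : n ∈ lengthSet (NZ G)) : n ≤ (Fintype.card G - 1) / 3 := by
  obtain ⟨ζ, ⟨hsum, hmin⟩, hcard⟩ := hn
  have h3 : ∀ A ∈ ζ, 3 ≤ Multiset.card A := by
    intro A hA
    have hAle : A ≤ NZ G := by
      obtain ⟨ζ', rfl⟩ := Multiset.exists_cons_of_mem hA
      rw [← hsum, Multiset.sum_cons]
      exact Multiset.le_add_right _ _
    obtain ⟨hA0, hAsum, _⟩ := hmin A hA
    have hc0 : Multiset.card A ≠ 0 := fun h => hA0 (Multiset.card_eq_zero.mp h)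
    have hc1 : Multiset.card A ≠ 1 := by
      intro h
      obtain ⟨x, rfl⟩ := Multiset.card_eq_one.mp h
      have hx : x ≠ 0 := mem_NZ.mp (Multiset.mem_of_le hAle (Multiset.mem_singleton_self x))
      exact hx (by simpa using hAsum)
    have hc2 : Multiset.card A ≠ 2 := by
      intro h
      obtain ⟨x, y, rfl⟩ := Multiset.card_eq_two.mp h
      have hxy : y = x := by
        have hs : x + y = 0 := by simpa using hAsum
        exact add_left_cancel (a := x) (by rw [hs, htwo x])
      subst hxy
      have hle := Multiset.le_iff_count.mp hAle y
      rw [count_NZ] at hle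
      have h2 : ({y, y} : Multiset G).count y = 2 := by simp
      rw [h2] at hle
      split_ifs at hle <;> omega
    omega
  have hcards : (ζ.map Multiset.card).sum = Fintype.card G - 1 := by
    rw [← card_NZ (G := G), ← hsum]
    exact (map_multiset_sum
      (⟨⟨Multiset.card, Multiset.card_zero⟩, Multiset.card_add⟩ : Multiset G →+ ℕ) ζ).symm
  have hge : Multiset.card ζ * 3 ≤ (ζ.map Multiset.card).sum := by
    have hb : ∀ x ∈ ζ.map Multiset.card, 3 ≤ x := by
      intro x hx
      obtain ⟨A, hA, rfl⟩ := Multiset.mem_map.mp hx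
      exact h3 A hA
    have := Multiset.card_nsmul_le_sum hb
    simpa [Multiset.card_map, smul_eq_mul, mul_comm] using this
  rw [hcards] at hge
  omega

end Aux

theorem statement16 (r : ℕ) (hr : 2 ≤ r) :
    maxL ((Finset.univ.erase (0 : Fin r → ZMod 2)).val) = (2 ^ r - 1) / 3 := by
  obtain ⟨n, rfl⟩ : ∃ n, r = n + 2 := ⟨r - 2, by omega⟩
  obtain ⟨htwo, -, ζ, hζ, hcard⟩ := goodP_fin n
  have hcardG : Fintype.card (Fin (n + 2) → ZMod 2) = 2 ^ (n + 2) := by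
    simp [Fintype.card_fun]
  have hBNZ : (Finset.univ.erase (0 : Fin (n + 2) → ZMod 2)).val
      = NZ (Fin (n + 2) → ZMod 2) := rfl
  rw [hBNZ]
  unfold maxL
  refine IsGreatest.csSup_eq ⟨⟨ζ, hζ, ?_⟩, fun m hm => ?_⟩
  · rw [hcard, hcardG]
  · have h := length_le htwo hm
    rwa [hcardG] at h
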